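/- For every integer n ≥ 2, the equation (1 - Σ_{i=1}^{n-1} 2^i/(2^i - 1))·x_1 + Σ_{i=1}^{n-1} (2^i/(2^i - 1))·x_{i+1} = 0 is (n-1)-regular; that is, every (n-1)-coloring of the positive integers admits a monochromatic positive-integer solution (x_1,...,x_n). -/

import Mathlib

/-- Alexeev–Tsimerman: the equation is (n-1)-regular. Variables are indexed
1 through n. -/
theorem stmt_6 (n : ℕ) (hn : 2 ≤ n) (c : ℕ → Fin (n - 1)) :
    ∃ x : ℕ → ℕ, (∀ i ∈ Finset.Icc 1 n, 0 < x i) ∧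
      (∀ i ∈ Finset.Icc 1 n, ∀ j ∈ Finset.Icc 1 n, c (x i) = c (x j)) ∧
      (1 - ∑ i ∈ Finset.Icc 1 (n - 1), (2 ^ i : ℚ) / (2 ^ i - 1)) * (x 1 : ℚ)
        + ∑ i ∈ Finset.Icc 1 (n - 1), ((2 ^ i : ℚ) / (2 ^ i - 1)) * (x (i + 1) : ℚ)
        = 0 := by
  -- pigeonhole: two powers of 2 among 2^0,...,2^(n-1) share a color
  obtain ⟨a, b, hab, hcab⟩ := Fintype.exists_ne_map_eq_of_card_lt
    (fun m : Fin n => c (2 ^ (m : ℕ))) (by simp; omega)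
  -- set j < k with c (2^j) = c (2^k)
  obtain ⟨j, k, hjk, hk, hc⟩ : ∃ j k : ℕ, j < k ∧ k ≤ n - 1 ∧ c (2 ^ j) = c (2 ^ k) := by
    rcases lt_or_gt_of_ne (fun h => hab (Fin.ext h)) with h | h
    · exact ⟨a, b, h, by omega, hcab⟩
    · exact ⟨b, a, h, by omega, hcab.symm⟩
  set i0 : ℕ := k - j with hi0def
  have hi0 : i0 ∈ Finset.Icc 1 (n - 1) := by
    simp only [Finset.mem_Icc]; omega
  refine ⟨fun m => if m = i0 + 1 then 2 ^ j else 2 ^ k, ?_, ?_, ?_⟩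
  · intro i _; dsimp only; split <;> positivity
  · have key : ∀ i ∈ Finset.Icc 1 n,
        c (if i = i0 + 1 then 2 ^ j else 2 ^ k) = c (2 ^ k) := by
      intro i _; split
      · exact hc
      · rfl
    intro i hi j' hj'; dsimp only; rw [key i hi, key j' hj']
  · have h1 : (if 1 = i0 + 1 then (2:ℕ) ^ j else 2 ^ k) = 2 ^ k := by
      rw [if_neg]; omega
    dsimp only
    rw [h1]
    rw [← Finset.add_sum_erase _ _ hi0, ← Finset.add_sum_erase _
      (fun i => ((2 ^ i : ℚ) / (2 ^ i - 1)) * _) hi0]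
    have herase : ∀ i ∈ (Finset.Icc 1 (n-1)).erase i0,
        ((2 ^ i : ℚ) / (2 ^ i - 1)) *
          ((if i + 1 = i0 + 1 then (2:ℕ) ^ j else 2 ^ k : ℕ) : ℚ)
        = ((2 ^ i : ℚ) / (2 ^ i - 1)) * ((2:ℚ) ^ k) := by
      intro i hi
      have : i ≠ i0 := (Finset.mem_erase.mp hi).1
      rw [if_neg (by omega)]
      push_cast; ring
    rw [Finset.sum_congr rfl herase, ← Finset.sum_mul]
    rw [if_pos rfl]
    have hne : (2:ℚ) ^ i0 - 1 ≠ 0 := by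
      have : (1:ℚ) < 2 ^ i0 := by
        apply one_lt_pow₀ (by norm_num)
        simp only [Finset.mem_Icc] at hi0; omega
      linarith
    have hk2 : (2:ℚ) ^ k = 2 ^ j * 2 ^ i0 := by
      rw [← pow_add]; congr 1; omega
    push_cast
    rw [hk2]
    field_simp
    ring
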